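/- For n ≥ 5, there is no real n×n matrix M and function δ : S_n → {0,1} with tr_σ(M) = ℓ(σ) − δ_σ for all σ ∈ S_n, where tr_σ(M) = Σ_i m_{i,σ(i)}. -/
import Mathlib


/-- The inversion number of a permutation of `Fin n`. -/
def inversions {n : ℕ} (σ : Equiv.Perm (Fin n)) : ℕ :=
  (Finset.univ.filter (fun p : Fin n × Fin n => p.1 < p.2 ∧ σ p.2 < σ p.1)).card

section aux

variable {n : ℕ} (hn : 5 ≤ n)

private lemma apply_image (σ : Equiv.Perm (Fin 5)) (a : Fin 5) :
    (σ.viaFintypeEmbedding (Fin.castLEEmb hn)) (Fin.castLE hn a)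
      = Fin.castLE hn (σ a) :=
  σ.viaFintypeEmbedding_apply_image (Fin.castLEEmb hn) a

private lemma apply_notMem (σ : Equiv.Perm (Fin 5)) (b : Fin n) (hb : ¬ (b : ℕ) < 5) :
    (σ.viaFintypeEmbedding (Fin.castLEEmb hn)) b = b := by
  apply σ.viaFintypeEmbedding_apply_notMem_range
  rintro ⟨a, rfl⟩
  exact hb a.isLt

private lemma inversions_via (σ : Equiv.Perm (Fin 5)) :
    inversions (σ.viaFintypeEmbedding (Fin.castLEEmb hn)) = inversions σ := by
  unfold inversions
  refine (Finset.card_bij (fun p _ => (Fin.castLE hn p.1, Fin.castLE hn p.2)) ?_ ?_ ?_).symm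
  · rintro ⟨a, b⟩ hab
    simp only [Finset.mem_filter, Finset.mem_univ, true_and] at hab ⊢
    refine ⟨?_, ?_⟩
    · have := Fin.lt_def.mp hab.1
      exact Fin.lt_def.mpr (by simpa using this)
    · rw [apply_image hn, apply_image hn]
      have := Fin.lt_def.mp hab.2
      exact Fin.lt_def.mpr (by simpa using this)
  · rintro ⟨a, b⟩ _ ⟨c, d⟩ _ h
    simp only [Prod.mk.injEq, Fin.castLE_inj] at h
    simp [Prod.ext_iff, h.1, h.2]
  · rintro ⟨a, b⟩ hab
    simp only [Finset.mem_filter, Finset.mem_univ, true_and] at hab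
    obtain ⟨hlt, hinv⟩ := hab
    have hltn : (a : ℕ) < (b : ℕ) := Fin.lt_def.mp hlt
    have ha : (a : ℕ) < 5 := by
      by_contra ha
      have hb : ¬ (b : ℕ) < 5 := by omega
      rw [apply_notMem hn σ a ha, apply_notMem hn σ b hb] at hinv
      exact absurd hinv (not_lt.2 hlt.le)
    have key : (σ.viaFintypeEmbedding (Fin.castLEEmb hn)) a = Fin.castLE hn (σ ⟨a, ha⟩) := by
      have h := apply_image hn σ ⟨(a : ℕ), ha⟩
      rwa [show Fin.castLE hn ⟨(a : ℕ), ha⟩ = a from by ext; rfl] at h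
    have hb : (b : ℕ) < 5 := by
      by_contra hb
      rw [apply_notMem hn σ b hb, key] at hinv
      have h1 := Fin.lt_def.mp hinv
      have h2 : ((Fin.castLE hn (σ ⟨(a : ℕ), ha⟩)) : ℕ) = ((σ ⟨(a : ℕ), ha⟩) : ℕ) := rfl
      have h3 : ((σ ⟨(a : ℕ), ha⟩) : ℕ) < 5 := (σ ⟨(a : ℕ), ha⟩).isLt
      omega
    have keyb : (σ.viaFintypeEmbedding (Fin.castLEEmb hn)) b = Fin.castLE hn (σ ⟨(b : ℕ), hb⟩) := by
      have h := apply_image hn σ ⟨(b : ℕ), hb⟩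
      rwa [show Fin.castLE hn ⟨(b : ℕ), hb⟩ = b from by ext; rfl] at h
    refine ⟨(⟨(a : ℕ), ha⟩, ⟨(b : ℕ), hb⟩), ?_, by simp [Prod.ext_iff, Fin.ext_iff]⟩
    simp only [Finset.mem_filter, Finset.mem_univ, true_and]
    refine ⟨Fin.lt_def.mpr (by simpa using hltn), ?_⟩
    rw [key, keyb] at hinv
    have h1 := Fin.lt_def.mp hinv
    exact Fin.lt_def.mpr (by simpa using h1)

private lemma trace_via (M : Matrix (Fin n) (Fin n) ℝ) (σ : Equiv.Perm (Fin 5)) :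
    ∑ i, M i ((σ.viaFintypeEmbedding (Fin.castLEEmb hn)) i)
      = (∑ i : Fin 5, M (Fin.castLE hn i) (Fin.castLE hn (σ i)))
        + ∑ i ∈ Finset.univ.filter (fun i : Fin n => ¬ (i : ℕ) < 5), M i i := by
  rw [← Finset.sum_filter_add_sum_filter_not Finset.univ (fun i : Fin n => (i : ℕ) < 5)]
  congr 1
  · have hset : Finset.univ.filter (fun i : Fin n => (i : ℕ) < 5)
        = Finset.univ.map (Fin.castLEEmb hn) := by
      ext b
      simp only [Finset.mem_filter, Finset.mem_univ, true_and, Finset.mem_map,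
        RelEmbedding.coe_toEmbedding, Fin.castLEEmb_apply]
      constructor
      · intro hb; exact ⟨⟨b, hb⟩, by ext; rfl⟩
      · rintro ⟨a, rfl⟩; exact a.isLt
    rw [hset, Finset.sum_map]
    refine Finset.sum_congr rfl fun a _ => ?_
    simp only [RelEmbedding.coe_toEmbedding, Fin.castLEEmb_apply]
    rw [apply_image hn]
  · refine Finset.sum_congr rfl fun b hb => ?_
    simp only [Finset.mem_filter] at hb
    rw [apply_notMem hn σ b hb.2]

end aux

theorem no_mixed_exponent_matrix {n : ℕ} (hn : 5 ≤ n) :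
    ¬ ∃ (M : Matrix (Fin n) (Fin n) ℝ) (δ : Equiv.Perm (Fin n) → ℝ),
        (∀ σ, δ σ = 0 ∨ δ σ = 1) ∧
        ∀ σ : Equiv.Perm (Fin n), ∑ i, M i (σ i) = (inversions σ : ℝ) - δ σ := by
  rintro ⟨M, δ, hδ, hM⟩
  set f := (Fin.castLEEmb hn)
  set E : Equiv.Perm (Fin 5) → Equiv.Perm (Fin n) := fun σ => σ.viaFintypeEmbedding f with hE
  set C : ℝ := ∑ i ∈ Finset.univ.filter (fun i : Fin n => ¬ (i : ℕ) < 5), M i i with hC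
  set T : ℝ := (∑ i : Fin 5, ∑ j : Fin 5, M (Fin.castLE hn i) (Fin.castLE hn j)) + 5 * C with hT
  -- sum of traces over rotations
  have hrot : ∑ k : Fin 5, ∑ i, M i ((E (Equiv.addRight k)) i) = T := by
    have : ∀ k : Fin 5, ∑ i, M i ((E (Equiv.addRight k)) i)
        = (∑ i : Fin 5, M (Fin.castLE hn i) (Fin.castLE hn (i + k))) + C :=
      fun k => trace_via hn M (Equiv.addRight k)
    simp only [this, Finset.sum_add_distrib, Finset.sum_const, Finset.card_univ,
      Fintype.card_fin, nsmul_eq_mul, hT]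
    congr 1
    rw [Finset.sum_comm]
    refine Finset.sum_congr rfl fun i _ => ?_
    exact Equiv.sum_comp (Equiv.addLeft i) (fun j => M (Fin.castLE hn i) (Fin.castLE hn j))
  have href : ∑ k : Fin 5, ∑ i, M i ((E (Equiv.subLeft k)) i) = T := by
    have : ∀ k : Fin 5, ∑ i, M i ((E (Equiv.subLeft k)) i)
        = (∑ i : Fin 5, M (Fin.castLE hn i) (Fin.castLE hn (k - i))) + C :=
      fun k => trace_via hn M (Equiv.subLeft k)
    simp only [this, Finset.sum_add_distrib, Finset.sum_const, Finset.card_univ,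
      Fintype.card_fin, nsmul_eq_mul, hT]
    congr 1
    rw [Finset.sum_comm]
    refine Finset.sum_congr rfl fun i _ => ?_
    exact Equiv.sum_comp (Equiv.subRight i) (fun j => M (Fin.castLE hn i) (Fin.castLE hn j))
  -- inversion sums
  have hinvrot : ∑ k : Fin 5, (inversions (E (Equiv.addRight k)) : ℝ) = 20 := by
    have : ∀ k : Fin 5, inversions (E (Equiv.addRight k)) = inversions (Equiv.addRight k) :=
      fun k => inversions_via hn _
    simp only [this]
    have h20 : ∑ k : Fin 5, inversions (Equiv.addRight k : Equiv.Perm (Fin 5)) = 20 := by decide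
    rw [← Nat.cast_sum, h20]; norm_num
  have hinvref : ∑ k : Fin 5, (inversions (E (Equiv.subLeft k)) : ℝ) = 30 := by
    have : ∀ k : Fin 5, inversions (E (Equiv.subLeft k)) = inversions (Equiv.subLeft k) :=
      fun k => inversions_via hn _
    simp only [this]
    have h30 : ∑ k : Fin 5, inversions (Equiv.subLeft k : Equiv.Perm (Fin 5)) = 30 := by decide
    rw [← Nat.cast_sum, h30]; norm_num
  have h1 : T = 20 - ∑ k : Fin 5, δ (E (Equiv.addRight k)) := by
    rw [← hrot]
    simp only [hM]
    rw [Finset.sum_sub_distrib, hinvrot]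
  have h2 : T = 30 - ∑ k : Fin 5, δ (E (Equiv.subLeft k)) := by
    rw [← href]
    simp only [hM]
    rw [Finset.sum_sub_distrib, hinvref]
  have hA : (0 : ℝ) ≤ ∑ k : Fin 5, δ (E (Equiv.addRight k)) := by
    refine Finset.sum_nonneg fun k _ => ?_
    rcases hδ (E (Equiv.addRight k)) with h | h <;> simp [h]
  have hB : ∑ k : Fin 5, δ (E (Equiv.subLeft k)) ≤ 5 := by
    calc ∑ k : Fin 5, δ (E (Equiv.subLeft k)) ≤ ∑ _k : Fin 5, (1 : ℝ) := by
          refine Finset.sum_le_sum fun k _ => ?_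
          rcases hδ (E (Equiv.subLeft k)) with h | h <;> simp [h]
      _ = 5 := by simp
  linarith
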